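/- For all nonnegative integers t and n, d(4t+2, 4n+1) = d(2t+1, 2n) + 1, where d(t,n) = r(n+t) − r(n) and r counts overlapping occurrences of the block 11 in binary. -/

import Mathlib

/-- `r n` counts indices `j ≥ 0` with the `j`-th and `(j+1)`-st binary digits of `n` both `1`. -/
def r (n : ℕ) : ℕ :=
  ((Finset.range (n + 1)).filter (fun j => n.testBit j ∧ n.testBit (j + 1))).card

/-- `d t n = r (n + t) - r n` as an integer. -/
def d (t n : ℕ) : ℤ := (r (n + t) : ℤ) - (r n : ℤ)

/-- `r` with an explicit bound on the range. -/
def rAux (n N : ℕ) : ℕ :=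
  ((Finset.range N).filter (fun j => n.testBit j ∧ n.testBit (j + 1))).card

lemma rAux_eq (n N : ℕ) (h : n + 1 ≤ N) : rAux n N = r n := by
  unfold rAux r
  congr 1
  ext j
  simp only [Finset.mem_filter, Finset.mem_range]
  constructor
  · rintro ⟨hj, h1, h2⟩
    refine ⟨?_, h1, h2⟩
    by_contra hc
    push_neg at hc
    have : n < 2 ^ j := lt_of_lt_of_le (Nat.lt_two_pow_self (n := n)) (Nat.pow_le_pow_right (by norm_num) (by omega))
    simp [Nat.testBit_lt_two_pow this] at h1
  · rintro ⟨hj, h1, h2⟩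
    exact ⟨by omega, h1, h2⟩

lemma testBit_two_mul_add_succ (m b j : ℕ) (hb : b < 2) :
    (2 * m + b).testBit (j + 1) = m.testBit j := by
  rw [Nat.testBit_succ]
  congr 1
  omega

lemma rAux_shift (m b N : ℕ) (hb : b < 2) :
    rAux (2 * m + b) (N + 1) =
      rAux m N + (if (2 * m + b).testBit 0 ∧ m.testBit 0 then 1 else 0) := by
  unfold rAux
  have hsucc : ∀ j, (2 * m + b).testBit (j + 1) = m.testBit j :=
    fun j => testBit_two_mul_add_succ m b j hb
  rw [show Finset.range (N + 1) = insert 0 ((Finset.range N).map ⟨fun i => i + 1, add_left_injective 1⟩) from Finset.range_add_one' N, Finset.filter_insert, Finset.filter_map]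
  simp only [Function.comp_def, Function.Embedding.coeFn_mk, hsucc]
  split_ifs with h
  · rw [Finset.card_insert_of_notMem (by simp), Finset.card_map]
  · rw [Finset.card_map]
    omega

lemma r_two_mul (m : ℕ) : r (2 * m) = r m := by
  have := rAux_shift m 0 (2 * m + 1) (by norm_num)
  have h0 : (2 * m + 0).testBit 0 = false := by
    simp [Nat.testBit_zero]
  rw [rAux_eq _ _ (by omega), rAux_eq _ _ (by omega)] at this
  simpa [h0] using this

lemma r_two_mul_add_one (m : ℕ) :
    r (2 * m + 1) = r m + (if m.testBit 0 then 1 else 0) := by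
  have := rAux_shift m 1 (2 * m + 1) (by norm_num)
  rw [rAux_eq _ _ (by omega), rAux_eq _ _ (by omega)] at this
  have h0 : (2 * m + 1).testBit 0 = true := by
    simp [Nat.testBit_zero]
  simpa [h0] using this

theorem d_rec (t n : ℕ) : d (4 * t + 2) (4 * n + 1) = d (2 * t + 1) (2 * n) + 1 := by
  unfold d
  have e1 : 4 * n + 1 + (4 * t + 2) = 2 * (2 * n + 2 * t + 1) + 1 := by ring
  have e2 : 4 * n + 1 = 2 * (2 * n) + 1 := by ring
  have e3 : 2 * n + (2 * t + 1) = 2 * n + 2 * t + 1 := by ring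
  rw [e1, e2, e3, r_two_mul_add_one, r_two_mul_add_one, r_two_mul]
  have ho : (2 * n + 2 * t + 1).testBit 0 = true := by simp [Nat.testBit_zero]; omega
  have he : (2 * n).testBit 0 = false := by simp [Nat.testBit_zero]
  rw [ho, he]
  norm_num
  ring
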